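/- Let Y be a square-integrable random vector in R^N with mean μ_Y and covariance matrix Σ_Y, and let φ_1, …, φ_N be an orthonormal basis of eigenvectors of Σ_Y with eigenvalues λ_1 ≥ ⋯ ≥ λ_N ≥ 0. For 1 ≤ N′ ≤ N, among all orthonormal families ψ_1, …, ψ_{N′} in R^N, the expected squared reconstruction error E[‖(Y − μ_Y) − Σ_{i=1}^{N′} ⟨ψ_i, Y − μ_Y⟩ ψ_i‖²] is minimized by taking ψ_i = φ_i, i.e. projecting onto the span of the N′ leading eigenvectors; the minimum value is Σ_{i=N′+1}^{N} λ_i. -/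

import Mathlib

open MeasureTheory Matrix
open scoped RealInnerProductSpace

section Aux

lemma aux_integrable_mul {α : Type*} [MeasurableSpace α] {μ : Measure α}
    {f g : α → ℝ} (hf : MemLp f 2 μ) (hg : MemLp g 2 μ) :
    Integrable (fun x => f x * g x) μ := by
  have h1 := (hf.add hg).integrable_sq
  have h2 := hf.integrable_sq
  have h3 := hg.integrable_sq
  have h : (fun x => f x * g x) = fun x => ((f x + g x) ^ 2 - f x ^ 2 - g x ^ 2) / 2 := by
    funext x; ring
  rw [h]
  exact ((h1.sub h2).sub h3).div_const 2

lemma aux_pyth {E : Type*} [NormedAddCommGroup E] [InnerProductSpace ℝ E]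
    {ι : Type*} [Fintype ι] {ψ : ι → E} (hψ : Orthonormal ℝ ψ) (x : E) :
    ‖x - ∑ i, ⟪ψ i, x⟫ • ψ i‖ ^ 2 = ‖x‖ ^ 2 - ∑ i, ⟪ψ i, x⟫ ^ 2 := by
  have hb : ‖∑ i, ⟪ψ i, x⟫ • ψ i‖ ^ 2 = ∑ i, ⟪ψ i, x⟫ ^ 2 := by
    rw [← real_inner_self_eq_norm_sq, hψ.inner_sum]
    simp [pow_two]
  have hxb : ⟪x, ∑ i, ⟪ψ i, x⟫ • ψ i⟫ = ∑ i, ⟪ψ i, x⟫ ^ 2 := by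
    rw [inner_sum]
    refine Finset.sum_congr rfl fun i _ => ?_
    rw [real_inner_smul_right, real_inner_comm, pow_two]
  rw [norm_sub_sq_real, hb, hxb]; ring

lemma aux_parseval {E : Type*} [NormedAddCommGroup E] [InnerProductSpace ℝ E]
    {ι : Type*} [Fintype ι] (b : OrthonormalBasis ι ℝ E) (x : E) :
    ∑ i, ⟪b i, x⟫ ^ 2 = ‖x‖ ^ 2 := by
  have h := aux_pyth b.orthonormal x
  rw [b.sum_repr'] at h
  simp at h
  linarith

lemma aux_image {N N' : ℕ} (h : N' ≤ N) :
    Finset.univ.filter (fun j : Fin N => (j : ℕ) < N') =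
      Finset.univ.image (Fin.castLE h) := by
  ext j
  simp only [Finset.mem_filter, Finset.mem_image, Finset.mem_univ, true_and]
  constructor
  · intro hj
    exact ⟨⟨(j : ℕ), hj⟩, by ext; simp⟩
  · rintro ⟨i, rfl⟩
    exact i.isLt

lemma aux_card {N N' : ℕ} (h : N' ≤ N) :
    (Finset.univ.filter (fun j : Fin N => (j : ℕ) < N')).card = N' := by
  rw [aux_image h, Finset.card_image_of_injective _ (Fin.castLE_injective h),
    Finset.card_univ, Fintype.card_fin]

lemma aux_kyfan {N N' : ℕ} (hN'1 : 1 ≤ N') (hN'N : N' ≤ N)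
    (lam : Fin N → ℝ) (hmono : ∀ i j : Fin N, i ≤ j → lam j ≤ lam i)
    (t : Fin N → ℝ) (h0 : ∀ j, 0 ≤ t j) (h1 : ∀ j, t j ≤ 1)
    (hsum : ∑ j, t j = (N' : ℝ)) :
    ∑ j, lam j * t j ≤ ∑ j ∈ Finset.univ.filter (fun j : Fin N => (j : ℕ) < N'), lam j := by
  have hlt : N' - 1 < N := by omega
  set c := lam ⟨N' - 1, hlt⟩ with hc
  have key : ∑ j, (lam j - c) * t j ≤
      ∑ j ∈ Finset.univ.filter (fun j : Fin N => (j : ℕ) < N'), (lam j - c) := by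
    rw [← Finset.sum_filter_add_sum_filter_not Finset.univ (fun j : Fin N => (j : ℕ) < N')
      (fun j => (lam j - c) * t j)]
    have hA : ∑ j ∈ Finset.univ.filter (fun j : Fin N => (j : ℕ) < N'), (lam j - c) * t j ≤
        ∑ j ∈ Finset.univ.filter (fun j : Fin N => (j : ℕ) < N'), (lam j - c) := by
      refine Finset.sum_le_sum fun j hj => ?_
      simp only [Finset.mem_filter, Finset.mem_univ, true_and] at hj
      have hjc : c ≤ lam j := hmono j ⟨N' - 1, hlt⟩ (Fin.le_def.2 (by simp; omega))
      nlinarith [h0 j, h1 j]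
    have hB : ∑ j ∈ Finset.univ.filter (fun j : Fin N => ¬ (j : ℕ) < N'), (lam j - c) * t j
        ≤ 0 := by
      refine Finset.sum_nonpos fun j hj => ?_
      simp only [Finset.mem_filter, Finset.mem_univ, true_and, not_lt] at hj
      have hjc : lam j ≤ c := hmono ⟨N' - 1, hlt⟩ j (Fin.le_def.2 (by simp; omega))
      exact mul_nonpos_of_nonpos_of_nonneg (by linarith) (h0 j)
    linarith
  have e1 : ∑ j, (lam j - c) * t j = ∑ j, lam j * t j - c * (N' : ℝ) := by
    simp only [sub_mul, Finset.sum_sub_distrib]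
    rw [← Finset.mul_sum, hsum]
  have e2 : ∑ j ∈ Finset.univ.filter (fun j : Fin N => (j : ℕ) < N'), (lam j - c) =
      ∑ j ∈ Finset.univ.filter (fun j : Fin N => (j : ℕ) < N'), lam j - c * (N' : ℝ) := by
    rw [Finset.sum_sub_distrib, Finset.sum_const, aux_card hN'N]
    simp [mul_comm]
  linarith

end Aux

/-- Among all orthonormal families `ψ₁, …, ψ_{N'}` in `ℝ^N`, the expected
squared reconstruction error `E[‖(Y − μY) − ∑_{i≤N'} ⟪ψ_i, Y − μY⟫ ψ_i‖²]` is minimized by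
the `N'` leading eigenvectors `φ₁, …, φ_{N'}` of the covariance matrix, and the minimum
value is the sum of the discarded eigenvalues `∑_{i>N'} λ_i`. -/
theorem pca_projection_minimizes_reconstruction_error
    {Ω : Type*} [MeasurableSpace Ω] (P : Measure Ω) [IsProbabilityMeasure P]
    {N : ℕ} (Y : Ω → EuclideanSpace ℝ (Fin N))
    (hYmeas : Measurable Y) (hY2 : MemLp Y 2 P)
    (μY : EuclideanSpace ℝ (Fin N)) (hμ : ∀ i, μY i = ∫ ω, Y ω i ∂P)
    (S : Matrix (Fin N) (Fin N) ℝ)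
    (hS : ∀ i j, S i j = ∫ ω, (Y ω i - μY i) * (Y ω j - μY j) ∂P)
    (φ : OrthonormalBasis (Fin N) ℝ (EuclideanSpace ℝ (Fin N))) (lam : Fin N → ℝ)
    (hmono : ∀ i j : Fin N, i ≤ j → lam j ≤ lam i) (hnonneg : ∀ i, 0 ≤ lam i)
    (heig : ∀ i j, S.mulVec (φ i) j = lam i * φ i j)
    (N' : ℕ) (hN'1 : 1 ≤ N') (hN'N : N' ≤ N) :
    (∀ ψ : Fin N' → EuclideanSpace ℝ (Fin N), Orthonormal ℝ ψ →
      (∫ ω, ‖(Y ω - μY) -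
          ∑ i : Fin N', ⟪φ (Fin.castLE hN'N i), Y ω - μY⟫ • φ (Fin.castLE hN'N i)‖ ^ 2 ∂P) ≤
      ∫ ω, ‖(Y ω - μY) - ∑ i : Fin N', ⟪ψ i, Y ω - μY⟫ • ψ i‖ ^ 2 ∂P) ∧
    (∫ ω, ‖(Y ω - μY) -
        ∑ i : Fin N', ⟪φ (Fin.castLE hN'N i), Y ω - μY⟫ • φ (Fin.castLE hN'N i)‖ ^ 2 ∂P) =
      ∑ i ∈ Finset.univ.filter (fun i : Fin N => N' ≤ (i : ℕ)), lam i := by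
  classical
  -- basic integrability facts
  have hZ2 : MemLp (fun ω => Y ω - μY) 2 P := hY2.sub (memLp_const μY)
  have hinner : ∀ u : EuclideanSpace ℝ (Fin N),
      MemLp (fun ω => ⟪u, Y ω - μY⟫) 2 P := fun u => hZ2.const_inner (𝕜 := ℝ) u
  have hsq : ∀ u : EuclideanSpace ℝ (Fin N),
      Integrable (fun ω => ⟪u, Y ω - μY⟫ ^ 2) P := fun u => (hinner u).integrable_sq
  have hcoord : ∀ j : Fin N, MemLp (fun ω => Y ω j - μY j) 2 P := by
    intro j
    have h := hZ2.const_inner (𝕜 := ℝ) (EuclideanSpace.single j (1 : ℝ))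
    simpa [EuclideanSpace.inner_single_left] using h
  have hprod : ∀ j k : Fin N,
      Integrable (fun ω => (Y ω j - μY j) * (Y ω k - μY k)) P :=
    fun j k => aux_integrable_mul (hcoord j) (hcoord k)
  have hinner_eq : ∀ u v : EuclideanSpace ℝ (Fin N), ⟪u, v⟫ = ∑ i, u i * v i := by
    intro u v; rw [PiLp.inner_apply]; simp [RCLike.inner_apply]; exact Finset.sum_congr rfl fun _ _ => mul_comm _ _
  -- eigen-equation, unfolded
  have heig' : ∀ i j, ∑ k, S j k * φ i k = lam i * φ i j := by
    intro i j
    have h := heig i j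
    rwa [Matrix.mulVec, dotProduct] at h
  -- expansion of a vector in the eigenbasis, coordinatewise
  have hrep : ∀ (u : EuclideanSpace ℝ (Fin N)) (k : Fin N),
      u k = ∑ i, ⟪φ i, u⟫ * φ i k := by
    intro u k
    conv_lhs => rw [← φ.sum_repr' u]
    rw [WithLp.ofLp_sum]; simp [Finset.sum_apply]
  -- the quadratic form of S in the eigenbasis
  have key : ∀ u : EuclideanSpace ℝ (Fin N),
      ∑ j, ∑ k, u j * u k * S j k = ∑ i, lam i * ⟪φ i, u⟫ ^ 2 := by
    intro u
    calc ∑ j, ∑ k, u j * u k * S j k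
        = ∑ j, ∑ k, ∑ i, ⟪φ i, u⟫ * (u j * (S j k * φ i k)) := by
          refine Finset.sum_congr rfl fun j _ => Finset.sum_congr rfl fun k _ => ?_
          rw [hrep u k, Finset.mul_sum, Finset.sum_mul]
          exact Finset.sum_congr rfl fun i _ => by ring
      _ = ∑ j, ∑ i, ⟪φ i, u⟫ * (u j * (lam i * φ i j)) := by
          refine Finset.sum_congr rfl fun j _ => ?_
          rw [Finset.sum_comm]
          refine Finset.sum_congr rfl fun i _ => ?_
          rw [← heig' i j, Finset.mul_sum, Finset.mul_sum]
      _ = ∑ i, ∑ j, ⟪φ i, u⟫ * (u j * (lam i * φ i j)) := Finset.sum_comm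
      _ = ∑ i, lam i * ⟪φ i, u⟫ ^ 2 := by
          refine Finset.sum_congr rfl fun i _ => ?_
          rw [← Finset.mul_sum]
          have h : ∑ j, u j * (lam i * φ i j) = lam i * ⟪φ i, u⟫ := by
            rw [hinner_eq, Finset.mul_sum]
            exact Finset.sum_congr rfl fun j _ => by ring
          rw [h]; ring
  -- the second moment of a projection
  have hq : ∀ u : EuclideanSpace ℝ (Fin N),
      (∫ ω, ⟪u, Y ω - μY⟫ ^ 2 ∂P) = ∑ i, lam i * ⟪φ i, u⟫ ^ 2 := by
    intro u
    rw [← key u]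
    have hpt : ∀ ω, ⟪u, Y ω - μY⟫ ^ 2
        = ∑ j, ∑ k, u j * u k * ((Y ω j - μY j) * (Y ω k - μY k)) := by
      intro ω
      rw [hinner_eq, pow_two, Finset.sum_mul_sum]
      refine Finset.sum_congr rfl fun j _ => Finset.sum_congr rfl fun k _ => ?_
      simp only [PiLp.sub_apply]
      ring
    simp_rw [hpt]
    rw [integral_finset_sum _ (fun j _ =>
      integrable_finset_sum _ (fun k _ => (hprod j k).const_mul _))]
    refine Finset.sum_congr rfl fun j _ => ?_
    rw [integral_finset_sum _ (fun k _ => (hprod j k).const_mul _)]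
    refine Finset.sum_congr rfl fun k _ => ?_
    rw [integral_const_mul, ← hS j k]
  have hqφ : ∀ m, (∫ ω, ⟪φ m, Y ω - μY⟫ ^ 2 ∂P) = lam m := by
    intro m
    rw [hq]
    rw [Finset.sum_eq_single m]
    · have : ⟪φ m, φ m⟫ = 1 := by
        simpa using orthonormal_iff_ite.mp φ.orthonormal m m
      rw [this]; ring
    · intro i _ hne
      have : ⟪φ i, φ m⟫ = 0 := by
        simpa [hne] using orthonormal_iff_ite.mp φ.orthonormal i m
      rw [this]; ring
    · intro h; exact absurd (Finset.mem_univ m) h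
  -- total variance
  have hnormpt : ∀ ω, ‖Y ω - μY‖ ^ 2 = ∑ i, ⟪φ i, Y ω - μY⟫ ^ 2 :=
    fun ω => (aux_parseval φ _).symm
  have hnormint : Integrable (fun ω => ‖Y ω - μY‖ ^ 2) P := by
    have h : (fun ω => ‖Y ω - μY‖ ^ 2) = fun ω => ∑ i, ⟪φ i, Y ω - μY⟫ ^ 2 := by
      funext ω; exact hnormpt ω
    rw [h]
    exact integrable_finset_sum _ fun i _ => hsq (φ i)
  have hT : (∫ ω, ‖Y ω - μY‖ ^ 2 ∂P) = ∑ i, lam i := by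
    simp_rw [hnormpt]
    rw [integral_finset_sum _ (fun i _ => hsq (φ i))]
    exact Finset.sum_congr rfl fun i _ => hqφ i
  -- the error formula
  have hE : ∀ ψ : Fin N' → EuclideanSpace ℝ (Fin N), Orthonormal ℝ ψ →
      (∫ ω, ‖(Y ω - μY) - ∑ i : Fin N', ⟪ψ i, Y ω - μY⟫ • ψ i‖ ^ 2 ∂P)
        = (∑ i, lam i) - ∑ i : Fin N', ∫ ω, ⟪ψ i, Y ω - μY⟫ ^ 2 ∂P := by
    intro ψ hψ
    have hpt : ∀ ω, ‖(Y ω - μY) - ∑ i : Fin N', ⟪ψ i, Y ω - μY⟫ • ψ i‖ ^ 2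
        = ‖Y ω - μY‖ ^ 2 - ∑ i : Fin N', ⟪ψ i, Y ω - μY⟫ ^ 2 :=
      fun ω => aux_pyth hψ _
    simp_rw [hpt]
    rw [integral_sub hnormint (integrable_finset_sum _ (fun i _ => hsq (ψ i))), hT,
      integral_finset_sum _ (fun i _ => hsq (ψ i))]
  have hφorth : Orthonormal ℝ (fun i : Fin N' => φ (Fin.castLE hN'N i)) :=
    φ.orthonormal.comp _ (Fin.castLE_injective hN'N)
  -- value of the projection on the leading eigenvectors
  have hvφ : ∑ i : Fin N', (∫ ω, ⟪φ (Fin.castLE hN'N i), Y ω - μY⟫ ^ 2 ∂P)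
      = ∑ j ∈ Finset.univ.filter (fun j : Fin N => (j : ℕ) < N'), lam j := by
    calc ∑ i : Fin N', (∫ ω, ⟪φ (Fin.castLE hN'N i), Y ω - μY⟫ ^ 2 ∂P)
        = ∑ i : Fin N', lam (Fin.castLE hN'N i) :=
          Finset.sum_congr rfl fun i _ => hqφ _
      _ = ∑ j ∈ Finset.univ.filter (fun j : Fin N => (j : ℕ) < N'), lam j := by
          rw [aux_image hN'N,
            Finset.sum_image (fun x _ y _ h => Fin.castLE_injective hN'N h)]
  constructor
  · intro ψ hψ
    rw [hE _ hφorth, hE ψ hψ, hvφ]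
    have hbound : ∑ i : Fin N', (∫ ω, ⟪ψ i, Y ω - μY⟫ ^ 2 ∂P)
        ≤ ∑ j ∈ Finset.univ.filter (fun j : Fin N => (j : ℕ) < N'), lam j := by
      have e : ∑ i : Fin N', (∫ ω, ⟪ψ i, Y ω - μY⟫ ^ 2 ∂P)
          = ∑ j, lam j * ∑ i : Fin N', ⟪φ j, ψ i⟫ ^ 2 := by
        simp_rw [hq]
        rw [Finset.sum_comm]
        exact Finset.sum_congr rfl fun j _ => by rw [Finset.mul_sum]
      rw [e]
      refine aux_kyfan hN'1 hN'N lam hmono _ (fun j => ?_) (fun j => ?_) ?_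
      · positivity
      · have hb := hψ.sum_inner_products_le (𝕜 := ℝ) (s := Finset.univ) (φ j)
        have hn : ‖φ j‖ = 1 := φ.orthonormal.1 j
        calc ∑ i : Fin N', ⟪φ j, ψ i⟫ ^ 2
            = ∑ i : Fin N', ‖⟪ψ i, φ j⟫‖ ^ 2 := by
              refine Finset.sum_congr rfl fun i _ => ?_
              rw [real_inner_comm, Real.norm_eq_abs, sq_abs]
          _ ≤ ‖φ j‖ ^ 2 := hb
          _ = 1 := by rw [hn]; norm_num
      · rw [Finset.sum_comm]
        have h1 : ∀ i : Fin N', ∑ j, ⟪φ j, ψ i⟫ ^ 2 = 1 := by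
          intro i
          rw [aux_parseval φ (ψ i), hψ.1 i]; norm_num
        rw [Finset.sum_congr rfl fun i _ => h1 i]
        simp
    linarith
  · rw [hE _ hφorth, hvφ]
    have hsplit := Finset.sum_filter_add_sum_filter_not Finset.univ
      (fun j : Fin N => (j : ℕ) < N') lam
    have hcompl : Finset.univ.filter (fun j : Fin N => ¬ (j : ℕ) < N')
        = Finset.univ.filter (fun j : Fin N => N' ≤ (j : ℕ)) := by
      ext j; simp [not_lt]
    rw [hcompl] at hsplit
    linarith
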